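/- (Dirichlet-type integral over the ordered simplex) For β ∈ (0,1) and α = 1−β, ∫_{S(n)} (1−s_1)^{−α} (s_1−s_2)^{−α} ⋯ (s_{n−1}−s_n)^{−α} ds = Γ(β)^n / Γ(1 + nβ), where S(n) = {0 < s_n < ... < s_1 < 1}. -/

import Mathlib

open MeasureTheory

lemma real_beta {p q : ℝ} (hp : 0 < p) (hq : 0 < q) :
    ∫ x in (0:ℝ)..1, x ^ (p - 1) * (1 - x) ^ (q - 1)
      = Real.Gamma p * Real.Gamma q / Real.Gamma (p + q) := by
  have h := Complex.Gamma_mul_Gamma_eq_betaIntegral (s := (p:ℂ)) (t := (q:ℂ))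
    (by simpa using hp) (by simpa using hq)
  have hI : Complex.betaIntegral p q
      = ((∫ x in (0:ℝ)..1, x ^ (p - 1) * (1 - x) ^ (q - 1) : ℝ) : ℂ) := by
    rw [Complex.betaIntegral, ← intervalIntegral.integral_ofReal]
    apply intervalIntegral.integral_congr
    intro x hx
    rw [Set.uIcc_of_le (by norm_num : (0:ℝ) ≤ 1)] at hx
    show (x:ℂ) ^ ((p:ℂ) - 1) * (1 - (x:ℂ)) ^ ((q:ℂ) - 1) = ((x ^ (p-1) * (1-x)^(q-1) : ℝ) : ℂ)
    rw [Complex.ofReal_mul, Complex.ofReal_cpow hx.1 (p - 1),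
      Complex.ofReal_cpow (by linarith [hx.2] : (0:ℝ) ≤ 1 - x) (q - 1)]
    push_cast
    ring
  rw [hI, Complex.Gamma_ofReal, Complex.Gamma_ofReal, ← Complex.ofReal_add,
    Complex.Gamma_ofReal, ← Complex.ofReal_mul, ← Complex.ofReal_mul] at h
  have h2 := Complex.ofReal_inj.mp h
  have hΓ : Real.Gamma (p + q) ≠ 0 := (Real.Gamma_pos_of_pos (by linarith)).ne'
  field_simp
  linarith [h2]

lemma beta_integrable {a b p q : ℝ} (hab : a < b) (hp : 0 < p) (hq : 0 < q) :
    IntervalIntegrable (fun x => (b - x) ^ (p - 1) * (x - a) ^ (q - 1)) volume a b := by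
  set m := (a + b) / 2 with hm
  have ham : a < m := by rw [hm]; linarith
  have hmb : m < b := by rw [hm]; linarith
  apply IntervalIntegrable.trans (b := m)
  · have h1 : IntervalIntegrable (fun x => (x - a) ^ (q - 1)) volume a m := by
      have := (intervalIntegral.intervalIntegrable_rpow' (by linarith : (-1:ℝ) < q - 1)
        (a := 0) (b := m - a)).comp_sub_right a
      simpa using this
    have := h1.continuousOn_mul (g := fun x => (b - x) ^ (p - 1)) ?_
    · simpa using this
    · apply ContinuousOn.rpow_const (by fun_prop)
      intro x hx
      rw [Set.uIcc_of_le ham.le] at hx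
      left
      have : x ≤ m := hx.2
      intro h0
      have : b - x > 0 := by linarith
      linarith [h0 ▸ this]
  · have h1 : IntervalIntegrable (fun x => (b - x) ^ (p - 1)) volume m b := by
      have := (intervalIntegral.intervalIntegrable_rpow' (by linarith : (-1:ℝ) < p - 1)
        (a := b - m) (b := 0)).comp_sub_left b
      simpa using this
    apply h1.mul_continuousOn (g := fun x => (x - a) ^ (q - 1))
    apply ContinuousOn.rpow_const (by fun_prop)
    intro x hx
    rw [Set.uIcc_of_le hmb.le] at hx
    left
    have : m ≤ x := hx.1
    intro h0
    have : x - a > 0 := by linarith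
    linarith [h0 ▸ this]

lemma beta_interval {a b p q : ℝ} (hab : a < b) (hp : 0 < p) (hq : 0 < q) :
    ∫ x in a..b, (b - x) ^ (p - 1) * (x - a) ^ (q - 1)
      = (b - a) ^ (p + q - 1) * (Real.Gamma p * Real.Gamma q / Real.Gamma (p + q)) := by
  have hba : (0:ℝ) < b - a := by linarith
  have h := intervalIntegral.integral_comp_mul_add (a := 0) (b := 1)
    (f := fun x => (b - x) ^ (p - 1) * (x - a) ^ (q - 1)) hba.ne' a
  rw [show (b - a) * 0 + a = a by ring, show (b - a) * 1 + a = b by ring] at h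
  have h2 : (∫ x in (0:ℝ)..1,
        (fun x => (b - x) ^ (p - 1) * (x - a) ^ (q - 1)) ((b - a) * x + a))
      = (b - a) ^ (p - 1) * (b - a) ^ (q - 1)
        * ∫ x in (0:ℝ)..1, x ^ (q - 1) * (1 - x) ^ (p - 1) := by
    rw [← intervalIntegral.integral_const_mul]
    apply intervalIntegral.integral_congr
    intro x hx
    rw [Set.uIcc_of_le (by norm_num : (0:ℝ) ≤ 1)] at hx
    simp only
    rw [show b - ((b - a) * x + a) = (b - a) * (1 - x) by ring,
      show (b - a) * x + a - a = (b - a) * x by ring,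
      Real.mul_rpow hba.le (by linarith [hx.2] : (0:ℝ) ≤ 1 - x),
      Real.mul_rpow hba.le hx.1]
    ring
  rw [h2, real_beta hq hp, smul_eq_mul] at h
  have h3 : (∫ x in a..b, (b - x) ^ (p - 1) * (x - a) ^ (q - 1))
      = (b - a) * ((b - a) ^ (p - 1) * (b - a) ^ (q - 1)
        * (Real.Gamma q * Real.Gamma p / Real.Gamma (q + p))) := by
    have hG : Real.Gamma (q + p) ≠ 0 := (Real.Gamma_pos_of_pos (by linarith)).ne'
    field_simp at h ⊢
    linarith [h]
  rw [h3, add_comm q p, mul_comm (Real.Gamma q)]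
  rw [show (b - a) * ((b - a) ^ (p - 1) * (b - a) ^ (q - 1)
        * (Real.Gamma p * Real.Gamma q / Real.Gamma (p + q)))
      = (b - a) * ((b - a) ^ (p - 1) * (b - a) ^ (q - 1))
        * (Real.Gamma p * Real.Gamma q / Real.Gamma (p + q)) by ring]
  congr 1
  rw [← Real.rpow_add hba, mul_comm, ← Real.rpow_add_one hba.ne']
  congr 1
  ring

lemma beta_lintegral {a b p q : ℝ} (hab : a < b) (hp : 0 < p) (hq : 0 < q) :
    ∫⁻ x in Set.Ioo a b,
        ENNReal.ofReal ((b - x) ^ (p - 1)) * ENNReal.ofReal ((x - a) ^ (q - 1))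
      = ENNReal.ofReal ((b - a) ^ (p + q - 1)
          * (Real.Gamma p * Real.Gamma q / Real.Gamma (p + q))) := by
  have hmerge : ∫⁻ x in Set.Ioo a b,
        ENNReal.ofReal ((b - x) ^ (p - 1)) * ENNReal.ofReal ((x - a) ^ (q - 1))
      = ∫⁻ x in Set.Ioo a b,
        ENNReal.ofReal ((b - x) ^ (p - 1) * (x - a) ^ (q - 1)) := by
    apply setLIntegral_congr_fun measurableSet_Ioo
    intro x hx
    simp only
    rw [ENNReal.ofReal_mul (Real.rpow_nonneg (by linarith [hx.2]) _)]
  rw [hmerge]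
  have hint : IntegrableOn (fun x => (b - x) ^ (p - 1) * (x - a) ^ (q - 1)) (Set.Ioo a b) := by
    exact ((beta_integrable hab hp hq).1).mono_set Set.Ioo_subset_Ioc_self
  rw [← ofReal_integral_eq_lintegral_ofReal hint]
  · rw [← MeasureTheory.integral_Ioc_eq_integral_Ioo,
      ← intervalIntegral.integral_of_le hab.le, beta_interval hab hp hq]
  · apply (ae_restrict_iff' measurableSet_Ioo).2
    filter_upwards with x hx
    exact mul_nonneg (Real.rpow_nonneg (by linarith [hx.2]) _)
      (Real.rpow_nonneg (by linarith [hx.1]) _)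

def Sset (n : ℕ) : Set (Fin (n + 1) → ℝ) :=
  {s | StrictAnti s ∧ ∀ i, s i ∈ Set.Ioo (0 : ℝ) 1}

lemma Sset_measurable (n : ℕ) : MeasurableSet (Sset n) := by
  have h1 : MeasurableSet {s : Fin (n + 1) → ℝ | StrictAnti s} := by
    have he : {s : Fin (n + 1) → ℝ | StrictAnti s}
        = ⋂ i : Fin n, {s : Fin (n + 1) → ℝ | s i.succ < s i.castSucc} := by
      ext s
      simp only [Set.mem_setOf_eq, Set.mem_iInter, Fin.strictAnti_iff_succ_lt]
    rw [he]
    exact MeasurableSet.iInter fun i =>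
      measurableSet_lt (measurable_pi_apply _) (measurable_pi_apply _)
  have h2 : MeasurableSet {s : Fin (n + 1) → ℝ | ∀ i, s i ∈ Set.Ioo (0 : ℝ) 1} := by
    have he : {s : Fin (n + 1) → ℝ | ∀ i, s i ∈ Set.Ioo (0 : ℝ) 1}
        = ⋂ i, (fun s : Fin (n + 1) → ℝ => s i) ⁻¹' Set.Ioo 0 1 := by
      ext s; simp
    rw [he]
    exact MeasurableSet.iInter fun i => (measurable_pi_apply i) measurableSet_Ioo
  exact h1.inter h2

lemma cons_mem_Sset {n : ℕ} (x : ℝ) (y : Fin (n + 1) → ℝ) :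
    (Fin.cons x y ∈ Sset (n + 1)) ↔ y ∈ Sset n ∧ y 0 < x ∧ x < 1 := by
  have key : StrictAnti (Fin.cons x y : Fin (n + 2) → ℝ) ↔ y 0 < x ∧ StrictAnti y := by
    rw [Fin.strictAnti_iff_succ_lt, Fin.strictAnti_iff_succ_lt]
    constructor
    · intro h
      refine ⟨?_, fun j => ?_⟩
      · have := h 0; simpa using this
      · have := h j.succ; simpa [← Fin.succ_castSucc] using this
    · rintro ⟨h0, h⟩ i
      induction i using Fin.cases with
      | zero => simpa using h0
      | succ j => simpa [← Fin.succ_castSucc] using h j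
  have key2 : (∀ i, (Fin.cons x y : Fin (n + 2) → ℝ) i ∈ Set.Ioo (0 : ℝ) 1)
      ↔ x ∈ Set.Ioo (0 : ℝ) 1 ∧ ∀ i, y i ∈ Set.Ioo (0 : ℝ) 1 := by
    rw [Fin.forall_fin_succ]
    simp
  constructor
  · rintro ⟨h1, h2⟩
    rw [key] at h1; rw [key2] at h2
    exact ⟨⟨h1.2, h2.2⟩, h1.1, h2.1.2⟩
  · rintro ⟨⟨hsa, hio⟩, hx0, hx1⟩
    exact ⟨key.2 ⟨hx0, hsa⟩, key2.2 ⟨⟨lt_trans (hio 0).1 hx0, hx1⟩, hio⟩⟩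

lemma F_measurable (n : ℕ) (γ β : ℝ) :
    Measurable (fun s : Fin (n + 1) → ℝ => ENNReal.ofReal ((1 - s 0) ^ (γ - 1))
      * ∏ i : Fin n, ENNReal.ofReal ((s i.castSucc - s i.succ) ^ (β - 1))) := by
  apply Measurable.mul
  · exact ((measurable_const.sub (measurable_pi_apply 0)).pow_const _).ennreal_ofReal
  · exact Finset.measurable_prod _ fun i _ =>
      (((measurable_pi_apply i.castSucc).sub (measurable_pi_apply i.succ)).pow_const _).ennreal_ofReal

lemma key_lintegral (β : ℝ) (hβ : 0 < β) :
    ∀ (n : ℕ) (γ : ℝ), 0 < γ →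
    (∫⁻ s in Sset n, ENNReal.ofReal ((1 - s 0) ^ (γ - 1))
        * ∏ i : Fin n, ENNReal.ofReal ((s i.castSucc - s i.succ) ^ (β - 1)))
      = ENNReal.ofReal (Real.Gamma γ * Real.Gamma β ^ n / Real.Gamma (γ + n * β + 1)) := by
  intro n
  induction n with
  | zero =>
    intro γ hγ
    simp only [Finset.univ_eq_empty, Finset.prod_empty, mul_one]
    have hemb := (MeasurableEquiv.funUnique (Fin 1) ℝ).measurableEmbedding
    have hmp := MeasureTheory.volume_preserving_funUnique (Fin 1) ℝ
    have hset : Sset 0 = (MeasurableEquiv.funUnique (Fin 1) ℝ) ⁻¹' Set.Ioo 0 1 := by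
      haveI : Subsingleton (Fin (0 + 1)) := Fin.subsingleton_one
      ext s
      constructor
      · rintro ⟨-, h2⟩; exact h2 default
      · intro h
        refine ⟨Subsingleton.strictAnti s, fun i => ?_⟩
        have hi : i = default := Subsingleton.elim _ _
        rw [hi]; exact h
    have heval : (∫⁻ s in (MeasurableEquiv.funUnique (Fin 1) ℝ) ⁻¹' Set.Ioo 0 1,
          ENNReal.ofReal ((1 - s 0) ^ (γ - 1)))
        = ∫⁻ x in Set.Ioo (0:ℝ) 1, ENNReal.ofReal ((1 - x) ^ (γ - 1)) :=
      hmp.setLIntegral_comp_preimage_emb hemb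
        (fun x => ENNReal.ofReal ((1 - x) ^ (γ - 1))) (Set.Ioo 0 1)
    rw [hset, heval]
    have hb := beta_lintegral (a := (0:ℝ)) (b := 1) (p := γ) (q := 1) one_pos hγ one_pos
    simp only [sub_zero, sub_self, Real.rpow_zero, ENNReal.ofReal_one, mul_one] at hb
    rw [hb]
    norm_num [Real.Gamma_one, Real.one_rpow]
  | succ n ih =>
    intro γ hγ
    set e := MeasurableEquiv.piFinSuccAbove (fun _ : Fin (n + 2) => ℝ) 0 with he
    have hmp : MeasurePreserving e.symm volume volume :=
      (MeasureTheory.volume_preserving_piFinSuccAbove (fun _ : Fin (n + 2) => ℝ) 0).symm e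
    have hcons : ∀ z : ℝ × (Fin (n + 1) → ℝ), e.symm z = Fin.cons z.1 z.2 := by
      intro z
      simp [he, MeasurableEquiv.piFinSuccAbove_symm_apply, Fin.insertNthEquiv,
        Fin.insertNth_zero']
    set F : (Fin (n + 2) → ℝ) → ENNReal := fun s =>
      ENNReal.ofReal ((1 - s 0) ^ (γ - 1))
        * ∏ i : Fin (n + 1), ENNReal.ofReal ((s i.castSucc - s i.succ) ^ (β - 1)) with hF
    have hGcons : ∀ (x : ℝ) (y : Fin (n + 1) → ℝ), F (Fin.cons x y)
        = (ENNReal.ofReal ((1 - x) ^ (γ - 1)) * ENNReal.ofReal ((x - y 0) ^ (β - 1)))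
          * ∏ j : Fin n, ENNReal.ofReal ((y j.castSucc - y j.succ) ^ (β - 1)) := by
      intro x y
      rw [hF]
      simp only [Fin.prod_univ_succ, Fin.cons_zero, Fin.castSucc_zero, Fin.cons_succ,
        ← Fin.succ_castSucc, mul_assoc]
    have hFmeas : Measurable F := F_measurable (n + 1) γ β
    have hstep1 : (∫⁻ s in Sset (n + 1), F s) = ∫⁻ z in e.symm ⁻¹' Sset (n + 1), F (e.symm z) :=
      (hmp.setLIntegral_comp_preimage_emb (MeasurableEquiv.measurableEmbedding _) F _).symm
    rw [hstep1]
    have hB : MeasurableSet (e.symm ⁻¹' Sset (n + 1)) :=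
      e.symm.measurable (Sset_measurable (n + 1))
    rw [← lintegral_indicator hB, MeasureTheory.Measure.volume_eq_prod,
      lintegral_prod_symm ((⇑e.symm ⁻¹' Sset (n + 1)).indicator (fun z => F (e.symm z)))
        (Measurable.aemeasurable (Measurable.indicator
          (hFmeas.comp e.symm.measurable) hB))]
    have hpt : ∀ y : Fin (n + 1) → ℝ,
        (∫⁻ x, (e.symm ⁻¹' Sset (n + 1)).indicator (fun z => F (e.symm z)) (x, y))
        = (Sset n).indicator (fun y => ∫⁻ x in Set.Ioo (y 0) 1, F (Fin.cons x y)) y := by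
      intro y
      by_cases hy : y ∈ Sset n
      · rw [Set.indicator_of_mem hy, ← lintegral_indicator measurableSet_Ioo]
        congr 1
        ext x
        by_cases hx : x ∈ Set.Ioo (y 0) 1
        · rw [Set.indicator_of_mem hx, Set.indicator_of_mem, hcons]
          rw [Set.mem_preimage, hcons]
          exact (cons_mem_Sset x y).2 ⟨hy, hx.1, hx.2⟩
        · rw [Set.indicator_of_notMem hx, Set.indicator_of_notMem]
          intro hmem
          rw [Set.mem_preimage, hcons] at hmem
          have h3 := (cons_mem_Sset x y).1 hmem
          exact hx ⟨h3.2.1, h3.2.2⟩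
      · rw [Set.indicator_of_notMem hy]
        have hz : ∀ x : ℝ,
            (e.symm ⁻¹' Sset (n + 1)).indicator (fun z => F (e.symm z)) (x, y) = 0 := by
          intro x
          apply Set.indicator_of_notMem
          intro hmem
          rw [Set.mem_preimage, hcons] at hmem
          exact hy ((cons_mem_Sset x y).1 hmem).1
        simp only [hz, lintegral_zero]
    simp only [hpt]
    rw [lintegral_indicator (Sset_measurable n)]
    have hBeta : (0:ℝ) ≤ Real.Gamma γ * Real.Gamma β / Real.Gamma (γ + β) :=
      div_nonneg (mul_nonneg (Real.Gamma_pos_of_pos hγ).le (Real.Gamma_pos_of_pos hβ).le)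
        (Real.Gamma_pos_of_pos (by linarith)).le
    have hinner : ∀ᵐ (y : Fin (n + 1) → ℝ) ∂volume, y ∈ Sset n →
        (∫⁻ x in Set.Ioo (y 0) 1, F (Fin.cons x y))
        = ENNReal.ofReal (Real.Gamma γ * Real.Gamma β / Real.Gamma (γ + β))
          * (ENNReal.ofReal ((1 - y 0) ^ (γ + β - 1))
            * ∏ j : Fin n, ENNReal.ofReal ((y j.castSucc - y j.succ) ^ (β - 1))) := by
      apply ae_of_all
      intro y hy
      have hy01 : y 0 < 1 := (hy.2 0).2
      calc ∫⁻ x in Set.Ioo (y 0) 1, F (Fin.cons x y)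
          = ∫⁻ x in Set.Ioo (y 0) 1,
              (ENNReal.ofReal ((1 - x) ^ (γ - 1)) * ENNReal.ofReal ((x - y 0) ^ (β - 1)))
              * ∏ j : Fin n, ENNReal.ofReal ((y j.castSucc - y j.succ) ^ (β - 1)) := by
            simp only [hGcons]
        _ = (∫⁻ x in Set.Ioo (y 0) 1,
              ENNReal.ofReal ((1 - x) ^ (γ - 1)) * ENNReal.ofReal ((x - y 0) ^ (β - 1)))
              * ∏ j : Fin n, ENNReal.ofReal ((y j.castSucc - y j.succ) ^ (β - 1)) := by
            apply lintegral_mul_const''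
            exact ((((measurable_const.sub measurable_id).pow_const _).ennreal_ofReal).mul
              (((measurable_id.sub measurable_const).pow_const _).ennreal_ofReal)).aemeasurable
        _ = ENNReal.ofReal ((1 - y 0) ^ (γ + β - 1)
              * (Real.Gamma γ * Real.Gamma β / Real.Gamma (γ + β)))
              * ∏ j : Fin n, ENNReal.ofReal ((y j.castSucc - y j.succ) ^ (β - 1)) := by
            rw [beta_lintegral hy01 hγ hβ]
        _ = _ := by
            rw [ENNReal.ofReal_mul (Real.rpow_nonneg (by linarith) _)]
            ring
    rw [setLIntegral_congr_fun_ae (Sset_measurable n) hinner,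
      lintegral_const_mul' _ _ ENNReal.ofReal_ne_top, ih (γ + β) (by linarith),
      ← ENNReal.ofReal_mul hBeta]
    congr 1
    have hne : Real.Gamma (γ + β) ≠ 0 := (Real.Gamma_pos_of_pos (by linarith)).ne'
    have hne2 : Real.Gamma (γ + β + n * β + 1) ≠ 0 := by
      refine (Real.Gamma_pos_of_pos ?_).ne'
      have : (0:ℝ) ≤ n * β := by positivity
      linarith
    have hne3 : Real.Gamma (γ + (n + 1 : ℕ) * β + 1) ≠ 0 := by
      refine (Real.Gamma_pos_of_pos ?_).ne'
      have : (0:ℝ) ≤ (n + 1 : ℕ) * β := by positivity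
      linarith
    have harg : γ + (n + 1 : ℕ) * β + 1 = γ + β + n * β + 1 := by push_cast; ring
    rw [harg]
    field_simp
    ring


/-- Dirichlet-type integral over the ordered simplex: for `β ∈ (0,1)`, `α = 1-β`,
`∫_{S(n)} (1-s_1)^{-α}(s_1-s_2)^{-α}⋯(s_{n-1}-s_n)^{-α} ds = Γ(β)^n / Γ(1+nβ)`. -/
theorem dirichlet_simplex_integral (n : ℕ) (β : ℝ) (hβ : β ∈ Set.Ioo (0 : ℝ) 1) :
    (∫ s in {s : Fin (n + 1) → ℝ | StrictAnti s ∧ ∀ i, s i ∈ Set.Ioo (0 : ℝ) 1},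
        ∏ i : Fin (n + 1),
          ((if h : (i : ℕ) = 0 then 1
            else s ⟨(i : ℕ) - 1, by have := i.isLt; omega⟩) - s i) ^ (-(1 - β)))
      = Real.Gamma β ^ (n + 1) / Real.Gamma (1 + (n + 1) * β) := by
  obtain ⟨hβ0, hβ1⟩ := hβ
  have hsetS : {s : Fin (n + 1) → ℝ | StrictAnti s ∧ ∀ i, s i ∈ Set.Ioo (0 : ℝ) 1}
      = Sset n := rfl
  have hprod : ∀ s : Fin (n + 1) → ℝ,
      (∏ i : Fin (n + 1),
          ((if h : (i : ℕ) = 0 then 1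
            else s ⟨(i : ℕ) - 1, by have := i.isLt; omega⟩) - s i) ^ (-(1 - β)))
      = (1 - s 0) ^ (β - 1) * ∏ i : Fin n, (s i.castSucc - s i.succ) ^ (β - 1) := by
    intro s
    rw [show -(1 - β) = β - 1 by ring, Fin.prod_univ_succ]
    congr 1
  rw [hsetS]
  simp only [hprod]
  have hmeas : Measurable (fun s : Fin (n + 1) → ℝ =>
      (1 - s 0) ^ (β - 1) * ∏ i : Fin n, (s i.castSucc - s i.succ) ^ (β - 1)) :=
    ((measurable_const.sub (measurable_pi_apply 0)).pow_const _).mul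
      (Finset.measurable_prod _ fun i _ =>
        ((measurable_pi_apply i.castSucc).sub (measurable_pi_apply i.succ)).pow_const _)
  rw [MeasureTheory.integral_eq_lintegral_of_nonneg_ae]
  rotate_left
  · apply (ae_restrict_iff' (Sset_measurable n)).2
    apply ae_of_all
    intro s hs
    apply mul_nonneg (Real.rpow_nonneg (by linarith [(hs.2 0).2]) _)
    apply Finset.prod_nonneg
    intro i _
    exact Real.rpow_nonneg (by linarith [hs.1 (Fin.castSucc_lt_succ (i := i))]) _
  · exact (hmeas.aestronglyMeasurable).restrict
  have hsplit : (∫⁻ s in Sset n, ENNReal.ofReal ((1 - s 0) ^ (β - 1)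
        * ∏ i : Fin n, (s i.castSucc - s i.succ) ^ (β - 1)))
      = ∫⁻ s in Sset n, ENNReal.ofReal ((1 - s 0) ^ (β - 1))
        * ∏ i : Fin n, ENNReal.ofReal ((s i.castSucc - s i.succ) ^ (β - 1)) := by
    apply setLIntegral_congr_fun (Sset_measurable n)
    intro s hs
    simp only
    rw [ENNReal.ofReal_mul (Real.rpow_nonneg (by linarith [(hs.2 0).2]) _),
      ENNReal.ofReal_prod_of_nonneg]
    intro i _
    exact Real.rpow_nonneg (by linarith [hs.1 (Fin.castSucc_lt_succ (i := i))]) _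
  rw [hsplit, key_lintegral β hβ0 n β hβ0]
  have hargpos : 0 < β + (n : ℝ) * β + 1 := by
    have : (0:ℝ) ≤ (n : ℝ) * β := by positivity
    linarith
  rw [ENNReal.toReal_ofReal (div_nonneg (mul_nonneg (Real.Gamma_pos_of_pos hβ0).le
    (pow_nonneg (Real.Gamma_pos_of_pos hβ0).le n)) (Real.Gamma_pos_of_pos hargpos).le)]
  have h1 : β + (n : ℝ) * β + 1 = 1 + ((n : ℝ) + 1) * β := by ring
  rw [h1, ← pow_succ']
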